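/- The single-species (r = 1) open ASEP on {0,1,…,L} is self-dual: its generator 𝓛 satisfies 𝓛 · D = D · 𝓛ᵀ, where D(η,ξ) := 1[A_1(ξ) ⊆ A_1(η) and A_{−1}(ξ) ⊆ A_{−1}(η)] · ∏_{x ∈ A_1(ξ)} Q^{−2} q^{−2x − 2 N→_x^{1}(η)} · ∏_{y ∈ A_{−1}(ξ)} q^{2y − 2 N←_y^{−1}(η)} · q^{−2 |A_{−1}(ξ)| · |A_1(η)|} · q^{|A_1(ξ)| (|A_1(ξ)| − 1)} · ∏_{y ∈ A_{−1}(ξ)} q^{2 N→_y^{1}(ξ)}. -/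

import Mathlib

open Matrix BigOperators Finset

noncomputable section

namespace Stmt1

/-- Configurations of the single-species open ASEP on sites `{0,1,…,L}`.
The value of a site is encoded in `Fin 3`: `0 ↦ −1`, `1 ↦ 0` (hole), `2 ↦ 1`;
this encoding is order-preserving. -/
abbrev Conf (L : ℕ) := Fin (L + 1) → Fin 3

/-- Bulk off-diagonal rates: a swap at an adjacent bond `(x, x+1)` happens at rate
`q²` if the left value is larger, and at rate `1` if the right value is larger. -/
def bulk (L : ℕ) (q : ℝ) (η η' : Conf L) : ℝ :=
  ∑ x : Fin (L + 1),
    if h : (x : ℕ) + 1 < L + 1 then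
      (if η' = η ∘ Equiv.swap x ⟨(x : ℕ) + 1, h⟩ ∧ η x ≠ η ⟨(x : ℕ) + 1, h⟩ then
        (if η ⟨(x : ℕ) + 1, h⟩ < η x then q ^ 2 else 1)
      else 0)
    else 0

/-- Boundary off-diagonal rates at site `0`: a `1` becomes a `−1` at rate `1`
and a `−1` becomes a `1` at rate `Q²`. -/
def bdry (L : ℕ) (Q : ℝ) (η η' : Conf L) : ℝ :=
  if (∀ z : Fin (L + 1), z ≠ 0 → η' z = η z) ∧ η 0 = 2 ∧ η' 0 = 0 then 1
  else if (∀ z : Fin (L + 1), z ≠ 0 → η' z = η z) ∧ η 0 = 0 ∧ η' 0 = 2 then Q ^ 2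
  else 0

/-- The generator `𝓛` of the single-species open ASEP on `{0,…,L}`:
off-diagonal entries are bulk plus boundary rates, diagonal entries make every
row sum to `0`. -/
def gen (L : ℕ) (q Q : ℝ) : Matrix (Conf L) (Conf L) ℝ :=
  fun η η' =>
    if η' = η then
      -∑ η'' : Conf L,
        (if η'' = η then 0 else bulk L q η η'' + bdry L Q η η'')
    else bulk L q η η' + bdry L Q η η'

/-- `A_1(ξ)`: the set of sites holding a `1`. -/
def A1 (L : ℕ) (ξ : Conf L) : Finset (Fin (L + 1)) :=
  Finset.univ.filter (fun x => ξ x = 2)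

/-- `A_{−1}(ξ)`: the set of sites holding a `−1`. -/
def Am1 (L : ℕ) (ξ : Conf L) : Finset (Fin (L + 1)) :=
  Finset.univ.filter (fun x => ξ x = 0)

/-- `N→_x^1(η)`: the number of `1`'s of `η` strictly to the right of `x`. -/
def NrP (L : ℕ) (η : Conf L) (x : Fin (L + 1)) : ℕ :=
  (Finset.univ.filter (fun y : Fin (L + 1) => x < y ∧ η y = 2)).card

/-- `N←_x^{−1}(η)`: the number of `−1`'s of `η` strictly to the left of `x`. -/
def NlM (L : ℕ) (η : Conf L) (x : Fin (L + 1)) : ℕ :=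
  (Finset.univ.filter (fun y : Fin (L + 1) => y < x ∧ η y = 0)).card

/-- The duality function of Theorem 1.3:
`D(η,ξ) = 1[A₁(ξ) ⊆ A₁(η) ∧ A₋₁(ξ) ⊆ A₋₁(η)] · ∏_{x ∈ A₁(ξ)} Q^{−2} q^{−2x−2N→_x^1(η)}
· ∏_{y ∈ A₋₁(ξ)} q^{2y−2N←_y^{−1}(η)} · q^{−2|A₋₁(ξ)||A₁(η)|} · q^{|A₁(ξ)|(|A₁(ξ)|−1)}
· ∏_{y ∈ A₋₁(ξ)} q^{2N→_y^1(ξ)}`. -/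
def dualFn (L : ℕ) (q Q : ℝ) : Matrix (Conf L) (Conf L) ℝ :=
  fun η ξ =>
    (if A1 L ξ ⊆ A1 L η ∧ Am1 L ξ ⊆ Am1 L η then (1 : ℝ) else 0) *
    (∏ x ∈ A1 L ξ,
      Q ^ (-2 : ℤ) * q ^ (-2 * ((x : ℕ) : ℤ) - 2 * (NrP L η x : ℤ))) *
    (∏ y ∈ Am1 L ξ,
      q ^ (2 * ((y : ℕ) : ℤ) - 2 * (NlM L η y : ℤ))) *
    q ^ (-2 * ((Am1 L ξ).card : ℤ) * ((A1 L η).card : ℤ)) *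
    q ^ (((A1 L ξ).card : ℤ) * (((A1 L ξ).card : ℤ) - 1)) *
    (∏ y ∈ Am1 L ξ, q ^ (2 * (NrP L ξ y : ℤ)))


/-! ### Auxiliary development -/

section Aux

variable {L : ℕ}

/-- indicator -/
def C3 (e f : Fin 3) : Prop := (f = 2 → e = 2) ∧ (f = 0 → e = 0)

instance (e f : Fin 3) : Decidable (C3 e f) := by unfold C3; infer_instance

/-- rate -/
def rte (q : ℝ) (a b : Fin 3) : ℝ := if a = b then 0 else if b < a then q ^ 2 else 1

def ind1 (a : Fin 3) : ℤ := if a = 2 then 1 else 0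
def ind0 (a : Fin 3) : ℤ := if a = 0 then 1 else 0

def δ₁ (a b c d : Fin 3) : ℤ :=
  2 * ind1 c * (ind1 b - ind1 a) + 2 * ind0 d * (ind0 a - ind0 b)

def δ₂ (a b c d : Fin 3) : ℤ :=
  (if c = 2 then -2 + 2 * ind1 b else if c = 0 then 2 - 2 * ind0 a - 2 * ind1 d else 0) +
  (if d = 2 then 2 - 2 * ind1 b else if d = 0 then -2 + 2 * ind1 c + 2 * ind0 a else 0)

lemma zpow_sum₀ {q : ℝ} (hq : q ≠ 0) {α : Type*} (s : Finset α) (f : α → ℤ) :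
    q ^ (∑ i ∈ s, f i) = ∏ i ∈ s, q ^ f i := by
  classical
  induction s using Finset.induction_on with
  | empty => simp
  | insert _ _ h ih => rw [Finset.sum_insert h, Finset.prod_insert h, zpow_add₀ hq, ih]

lemma fin3 (a : Fin 3) : a = 0 ∨ a = 1 ∨ a = 2 := by
  revert a; decide

lemma mem_A1 (ξ : Conf L) (z : Fin (L+1)) : z ∈ A1 L ξ ↔ ξ z = 2 := by
  simp [A1]

lemma mem_Am1 (ξ : Conf L) (z : Fin (L+1)) : z ∈ Am1 L ξ ↔ ξ z = 0 := by
  simp [Am1]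

lemma sum_diff_one {α : Type*} [DecidableEq α] (s : Finset α) (f g : α → ℤ) (x : α)
    (h : ∀ z ∈ s, z ≠ x → f z = g z) :
    ∑ z ∈ s, f z - ∑ z ∈ s, g z = (if x ∈ s then f x - g x else 0) := by
  rw [← Finset.sum_sub_distrib]
  have key : ∀ z ∈ s, f z - g z = if z = x then f x - g x else 0 := by
    intro z hz
    rcases eq_or_ne z x with rfl | hzx
    · simp
    · simp [hzx, h z hz hzx]
  rw [Finset.sum_congr rfl key, Finset.sum_ite_eq' s x (fun _ => f x - g x)]

lemma sum_diff_two {α : Type*} [DecidableEq α] (s : Finset α) (f g : α → ℤ) (x y : α)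
    (hxy : x ≠ y) (h : ∀ z ∈ s, z ≠ x → z ≠ y → f z = g z) :
    ∑ z ∈ s, f z - ∑ z ∈ s, g z =
      (if x ∈ s then f x - g x else 0) + (if y ∈ s then f y - g y else 0) := by
  rw [← Finset.sum_sub_distrib]
  have key : ∀ z ∈ s, f z - g z =
      (if z = x then f x - g x else 0) + (if z = y then f y - g y else 0) := by
    intro z hz
    rcases eq_or_ne z x with rfl | hzx
    · simp [hxy]
    · rcases eq_or_ne z y with rfl | hzy
      · simp [hzx]
      · simp [hzx, hzy, h z hz hzx hzy]
  rw [Finset.sum_congr rfl key, Finset.sum_add_distrib,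
    Finset.sum_ite_eq' s x (fun _ => f x - g x), Finset.sum_ite_eq' s y (fun _ => f y - g y)]

/-- the q-exponent of the duality function -/
def Dexp (L : ℕ) (η ξ : Conf L) : ℤ :=
  (∑ z ∈ A1 L ξ, (-2 * ((z : ℕ) : ℤ) - 2 * (NrP L η z : ℤ))) +
  (∑ z ∈ Am1 L ξ, (2 * ((z : ℕ) : ℤ) - 2 * (NlM L η z : ℤ) + 2 * (NrP L ξ z : ℤ))) -
  2 * ((Am1 L ξ).card : ℤ) * ((A1 L η).card : ℤ) +
  ((A1 L ξ).card : ℤ) * (((A1 L ξ).card : ℤ) - 1)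

def IndP (L : ℕ) (η ξ : Conf L) : Prop := ∀ z, C3 (η z) (ξ z)

instance (η ξ : Conf L) : Decidable (IndP L η ξ) := by unfold IndP; infer_instance

lemma ind_iff (η ξ : Conf L) :
    (A1 L ξ ⊆ A1 L η ∧ Am1 L ξ ⊆ Am1 L η) ↔ IndP L η ξ := by
  unfold A1 Am1 IndP C3
  simp only [Finset.subset_iff, Finset.mem_filter, Finset.mem_univ, true_and]
  constructor
  · rintro ⟨h1, h2⟩ z
    exact ⟨fun h => h1 h, fun h => h2 h⟩
  · intro h
    exact ⟨fun {z} hz => (h z).1 hz, fun {z} hz => (h z).2 hz⟩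

lemma dualFn_eq {q Q : ℝ} (hq : q ≠ 0) (η ξ : Conf L) :
    dualFn L q Q η ξ =
      (if IndP L η ξ then (1 : ℝ) else 0) *
        Q ^ (-2 * ((A1 L ξ).card : ℤ)) * q ^ Dexp L η ξ := by
  unfold dualFn
  rw [if_congr (ind_iff η ξ) rfl rfl]
  have e : Dexp L η ξ =
      (∑ z ∈ A1 L ξ, (-2 * ((z:ℕ):ℤ) - 2 * (NrP L η z : ℤ))) +
      (∑ z ∈ Am1 L ξ, (2 * ((z:ℕ):ℤ) - 2 * (NlM L η z : ℤ))) +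
      (∑ z ∈ Am1 L ξ, 2 * (NrP L ξ z : ℤ)) +
      (-2 * ((Am1 L ξ).card : ℤ) * ((A1 L η).card : ℤ)) +
      ((A1 L ξ).card : ℤ) * (((A1 L ξ).card : ℤ) - 1) := by
    unfold Dexp
    rw [Finset.sum_add_distrib]
    ring
  rw [e, zpow_add₀ hq, zpow_add₀ hq, zpow_add₀ hq, zpow_add₀ hq,
    zpow_sum₀ hq, zpow_sum₀ hq, zpow_sum₀ hq]
  rw [Finset.prod_mul_distrib, Finset.prod_const, ← zpow_natCast (Q ^ (-2:ℤ)), ← _root_.zpow_mul]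
  ring

section Swap

variable (η ξ : Conf L) (x y : Fin (L + 1))

lemma swap_lt_iff (hxy : (x : ℕ) + 1 = (y : ℕ)) {z : Fin (L+1)} (hz : z ≠ x) (u : Fin (L+1)) :
    z < Equiv.swap x y u ↔ z < u := by
  have hz' : (z : ℕ) ≠ (x : ℕ) := fun h => hz (Fin.ext h)
  rcases eq_or_ne u x with rfl | hux
  · rw [Equiv.swap_apply_left]
    simp only [Fin.lt_def]
    omega
  · rcases eq_or_ne u y with rfl | huy
    · rw [Equiv.swap_apply_right]
      simp only [Fin.lt_def]
      omega
    · rw [Equiv.swap_apply_of_ne_of_ne hux huy]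

lemma lt_swap_iff (hxy : (x : ℕ) + 1 = (y : ℕ)) {z : Fin (L+1)} (hz : z ≠ y) (u : Fin (L+1)) :
    Equiv.swap x y u < z ↔ u < z := by
  have hz' : (z : ℕ) ≠ (y : ℕ) := fun h => hz (Fin.ext h)
  rcases eq_or_ne u x with rfl | hux
  · rw [Equiv.swap_apply_left]
    simp only [Fin.lt_def]
    omega
  · rcases eq_or_ne u y with rfl | huy
    · rw [Equiv.swap_apply_right]
      simp only [Fin.lt_def]
      omega
    · rw [Equiv.swap_apply_of_ne_of_ne hux huy]

lemma NrP_swap_ne (hxy : (x : ℕ) + 1 = (y : ℕ)) {z : Fin (L+1)} (hz : z ≠ x) :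
    NrP L (η ∘ Equiv.swap x y) z = NrP L η z := by
  unfold NrP
  rw [Finset.card_filter, Finset.card_filter,
    ← Equiv.sum_comp (Equiv.swap x y) (fun w => if z < w ∧ η w = 2 then 1 else 0)]
  refine Finset.sum_congr rfl fun u _ => ?_
  simp only [Function.comp_apply, Equiv.swap_apply_self]
  simp only [swap_lt_iff x y hxy hz]

lemma NlM_swap_ne (hxy : (x : ℕ) + 1 = (y : ℕ)) {z : Fin (L+1)} (hz : z ≠ y) :
    NlM L (η ∘ Equiv.swap x y) z = NlM L η z := by
  unfold NlM
  rw [Finset.card_filter, Finset.card_filter,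
    ← Equiv.sum_comp (Equiv.swap x y) (fun w => if w < z ∧ η w = 0 then 1 else 0)]
  refine Finset.sum_congr rfl fun u _ => ?_
  simp only [Function.comp_apply, Equiv.swap_apply_self]
  simp only [lt_swap_iff x y hxy hz]

lemma NrP_succ (hxy : (x : ℕ) + 1 = (y : ℕ)) : (NrP L η x : ℤ) = (if η y = 2 then 1 else 0) + NrP L η y := by
  unfold NrP
  rw [Finset.card_filter, Finset.card_filter]
  push_cast
  have key : ∀ w : Fin (L+1),
      (if x < w ∧ η w = 2 then (1:ℤ) else 0) =
        (if w = y then (if η y = 2 then (1:ℤ) else 0) else 0) +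
          (if y < w ∧ η w = 2 then 1 else 0) := by
    intro w
    rcases eq_or_ne w y with rfl | hw
    · have h1 : x < w := by simp only [Fin.lt_def]; omega
      have h2 : ¬ w < w := lt_irrefl w
      by_cases h3 : η w = 2 <;> simp [h1, h2, h3]
    · have hw' : (w : ℕ) ≠ (y : ℕ) := fun h => hw (Fin.ext h)
      have h1 : x < w ↔ y < w := by simp only [Fin.lt_def]; omega
      simp [hw, h1]
  rw [Finset.sum_congr rfl fun w _ => key w, Finset.sum_add_distrib,
    Finset.sum_ite_eq' Finset.univ y (fun _ => if η y = 2 then (1:ℤ) else 0)]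
  simp

lemma NlM_succ (hxy : (x : ℕ) + 1 = (y : ℕ)) : (NlM L η y : ℤ) = NlM L η x + (if η x = 0 then 1 else 0) := by
  unfold NlM
  rw [Finset.card_filter, Finset.card_filter]
  push_cast
  have key : ∀ w : Fin (L+1),
      (if w < y ∧ η w = 0 then (1:ℤ) else 0) =
        (if w < x ∧ η w = 0 then (1:ℤ) else 0) +
          (if w = x then (if η x = 0 then (1:ℤ) else 0) else 0) := by
    intro w
    rcases eq_or_ne w x with rfl | hw
    · have h1 : w < y := by simp only [Fin.lt_def]; omega
      have h2 : ¬ w < w := lt_irrefl w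
      by_cases h3 : η w = 0 <;> simp [h1, h2, h3]
    · have hw' : (w : ℕ) ≠ (x : ℕ) := fun h => hw (Fin.ext h)
      have h1 : w < y ↔ w < x := by simp only [Fin.lt_def]; omega
      simp [hw, h1]
  rw [Finset.sum_congr rfl fun w _ => key w, Finset.sum_add_distrib,
    Finset.sum_ite_eq' Finset.univ x (fun _ => if η x = 0 then (1:ℤ) else 0)]
  simp

lemma NrP_swap_self (hxy : (x : ℕ) + 1 = (y : ℕ)) :
    (NrP L (η ∘ Equiv.swap x y) x : ℤ) = (NrP L η x : ℤ) + ind1 (η x) - ind1 (η y) := by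
  have hyx : y ≠ x := fun h => by
    have := congrArg Fin.val h
    omega
  rw [NrP_succ (η ∘ Equiv.swap x y) x y hxy, NrP_succ η x y hxy,
    NrP_swap_ne η x y hxy hyx]
  simp only [Function.comp_apply, Equiv.swap_apply_right]
  unfold ind1
  ring

lemma NlM_swap_self (hxy : (x : ℕ) + 1 = (y : ℕ)) :
    (NlM L (η ∘ Equiv.swap x y) y : ℤ) = (NlM L η y : ℤ) + ind0 (η y) - ind0 (η x) := by
  have hxy' : x ≠ y := fun h => by
    have := congrArg Fin.val h
    omega
  rw [NlM_succ (η ∘ Equiv.swap x y) x y hxy, NlM_succ η x y hxy,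
    NlM_swap_ne η x y hxy hxy']
  simp only [Function.comp_apply, Equiv.swap_apply_left]
  unfold ind0
  ring

lemma A1_swap : A1 L (η ∘ Equiv.swap x y) = (A1 L η).map (Equiv.swap x y).toEmbedding := by
  ext z
  simp only [A1, Finset.mem_filter, Finset.mem_univ, true_and, Finset.mem_map,
    Equiv.coe_toEmbedding, Function.comp_apply]
  constructor
  · intro h
    exact ⟨Equiv.swap x y z, h, Equiv.swap_apply_self _ _ _⟩
  · rintro ⟨w, hw, rfl⟩
    rwa [Equiv.swap_apply_self]

lemma Am1_swap : Am1 L (η ∘ Equiv.swap x y) = (Am1 L η).map (Equiv.swap x y).toEmbedding := by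
  ext z
  simp only [Am1, Finset.mem_filter, Finset.mem_univ, true_and, Finset.mem_map,
    Equiv.coe_toEmbedding, Function.comp_apply]
  constructor
  · intro h
    exact ⟨Equiv.swap x y z, h, Equiv.swap_apply_self _ _ _⟩
  · rintro ⟨w, hw, rfl⟩
    rwa [Equiv.swap_apply_self]

lemma card_A1_swap : (A1 L (η ∘ Equiv.swap x y)).card = (A1 L η).card := by
  rw [A1_swap]; exact Finset.card_map _

lemma card_Am1_swap : (Am1 L (η ∘ Equiv.swap x y)).card = (Am1 L η).card := by
  rw [Am1_swap]; exact Finset.card_map _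

lemma Dexp_swap_left (hxy : (x : ℕ) + 1 = (y : ℕ)) :
    Dexp L (η ∘ Equiv.swap x y) ξ = Dexp L η ξ + δ₁ (η x) (η y) (ξ x) (ξ y) := by
  have hxny : x ≠ y := fun h => by have := congrArg Fin.val h; omega
  unfold Dexp
  rw [card_A1_swap]
  have h1 := sum_diff_one (A1 L ξ)
      (fun z => -2 * ((z:ℕ):ℤ) - 2 * (NrP L (η ∘ Equiv.swap x y) z : ℤ))
      (fun z => -2 * ((z:ℕ):ℤ) - 2 * (NrP L η z : ℤ)) x
      (fun z _ hz => by simp only [NrP_swap_ne η x y hxy hz])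
  have h2 := sum_diff_one (Am1 L ξ)
      (fun z => 2 * ((z:ℕ):ℤ) - 2 * (NlM L (η ∘ Equiv.swap x y) z : ℤ) + 2 * (NrP L ξ z : ℤ))
      (fun z => 2 * ((z:ℕ):ℤ) - 2 * (NlM L η z : ℤ) + 2 * (NrP L ξ z : ℤ)) y
      (fun z _ hz => by simp only [NlM_swap_ne η x y hxy hz])
  rw [NrP_swap_self η x y hxy] at h1
  rw [NlM_swap_self η x y hxy] at h2
  have hc1 : (if x ∈ A1 L ξ then
        -2 * ((x:ℕ):ℤ) - 2 * ((NrP L η x : ℤ) + ind1 (η x) - ind1 (η y)) -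
          (-2 * ((x:ℕ):ℤ) - 2 * (NrP L η x : ℤ)) else 0)
      = 2 * ind1 (ξ x) * (ind1 (η y) - ind1 (η x)) := by
    by_cases hx : ξ x = 2
    · rw [if_pos ((mem_A1 ξ x).mpr hx)]
      have : ind1 (ξ x) = 1 := by simp [ind1, hx]
      rw [this]; ring
    · rw [if_neg (fun h => hx ((mem_A1 ξ x).mp h))]
      have : ind1 (ξ x) = 0 := by simp [ind1, hx]
      rw [this]; ring
  have hc2 : (if y ∈ Am1 L ξ then
        2 * ((y:ℕ):ℤ) - 2 * ((NlM L η y : ℤ) + ind0 (η y) - ind0 (η x)) + 2 * (NrP L ξ y : ℤ) -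
          (2 * ((y:ℕ):ℤ) - 2 * (NlM L η y : ℤ) + 2 * (NrP L ξ y : ℤ)) else 0)
      = 2 * ind0 (ξ y) * (ind0 (η x) - ind0 (η y)) := by
    by_cases hy : ξ y = 0
    · rw [if_pos ((mem_Am1 ξ y).mpr hy)]
      have : ind0 (ξ y) = 1 := by simp [ind0, hy]
      rw [this]; ring
    · rw [if_neg (fun h => hy ((mem_Am1 ξ y).mp h))]
      have : ind0 (ξ y) = 0 := by simp [ind0, hy]
      rw [this]; ring
  rw [hc1] at h1
  rw [hc2] at h2
  unfold δ₁
  linarith [h1, h2]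

lemma Dexp_swap_right (hxy : (x : ℕ) + 1 = (y : ℕ)) :
    Dexp L η (ξ ∘ Equiv.swap x y) = Dexp L η ξ + δ₂ (η x) (η y) (ξ x) (ξ y) := by
  have hxny : x ≠ y := fun h => by have := congrArg Fin.val h; omega
  have hyx : ((y:ℕ):ℤ) = ((x:ℕ):ℤ) + 1 := by exact_mod_cast hxy.symm
  unfold Dexp
  rw [A1_swap ξ x y, Am1_swap ξ x y, Finset.sum_map, Finset.sum_map, Finset.card_map,
    Finset.card_map]
  simp only [Equiv.coe_toEmbedding]
  have h1 := sum_diff_two (A1 L ξ)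
      (fun z => -2 * (((Equiv.swap x y z : Fin (L+1)):ℕ):ℤ) -
        2 * (NrP L η (Equiv.swap x y z) : ℤ))
      (fun z => -2 * ((z:ℕ):ℤ) - 2 * (NrP L η z : ℤ)) x y hxny
      (fun z _ hzx hzy => by simp only [Equiv.swap_apply_of_ne_of_ne hzx hzy])
  have h2 := sum_diff_two (Am1 L ξ)
      (fun z => 2 * (((Equiv.swap x y z : Fin (L+1)):ℕ):ℤ) -
        2 * (NlM L η (Equiv.swap x y z) : ℤ) +
        2 * (NrP L (ξ ∘ Equiv.swap x y) (Equiv.swap x y z) : ℤ))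
      (fun z => 2 * ((z:ℕ):ℤ) - 2 * (NlM L η z : ℤ) + 2 * (NrP L ξ z : ℤ)) x y hxny
      (fun z _ hzx hzy => by
        simp only [Equiv.swap_apply_of_ne_of_ne hzx hzy, NrP_swap_ne ξ x y hxy hzx])
  simp only [Equiv.swap_apply_left, Equiv.swap_apply_right] at h1 h2
  rw [NrP_swap_ne ξ x y hxy (fun h => hxny h.symm), NrP_swap_self ξ x y hxy] at h2
  have v1 : -2 * ((y:ℕ):ℤ) - 2 * (NrP L η y : ℤ) - (-2 * ((x:ℕ):ℤ) - 2 * (NrP L η x : ℤ))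
      = -2 + 2 * ind1 (η y) := by
    rw [NrP_succ η x y hxy, hyx]; unfold ind1; ring
  have v2 : -2 * ((x:ℕ):ℤ) - 2 * (NrP L η x : ℤ) - (-2 * ((y:ℕ):ℤ) - 2 * (NrP L η y : ℤ))
      = 2 - 2 * ind1 (η y) := by
    rw [NrP_succ η x y hxy, hyx]; unfold ind1; ring
  have v3 : 2 * ((y:ℕ):ℤ) - 2 * (NlM L η y : ℤ) + 2 * (NrP L ξ y : ℤ) -
      (2 * ((x:ℕ):ℤ) - 2 * (NlM L η x : ℤ) + 2 * (NrP L ξ x : ℤ))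
      = 2 - 2 * ind0 (η x) - 2 * ind1 (ξ y) := by
    rw [NlM_succ η x y hxy, NrP_succ ξ x y hxy, hyx]; unfold ind0 ind1; ring
  have v4 : 2 * ((x:ℕ):ℤ) - 2 * (NlM L η x : ℤ) +
      2 * ((NrP L ξ x : ℤ) + ind1 (ξ x) - ind1 (ξ y)) -
      (2 * ((y:ℕ):ℤ) - 2 * (NlM L η y : ℤ) + 2 * (NrP L ξ y : ℤ))
      = -2 + 2 * ind1 (ξ x) + 2 * ind0 (η x) := by
    rw [NlM_succ η x y hxy, NrP_succ ξ x y hxy, hyx]; unfold ind0 ind1; ring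
  rw [v1, v2] at h1
  rw [v3, v4] at h2
  have hmem : (if x ∈ A1 L ξ then -2 + 2 * ind1 (η y) else 0) +
      (if y ∈ A1 L ξ then 2 - 2 * ind1 (η y) else 0) +
      ((if x ∈ Am1 L ξ then 2 - 2 * ind0 (η x) - 2 * ind1 (ξ y) else 0) +
      (if y ∈ Am1 L ξ then -2 + 2 * ind1 (ξ x) + 2 * ind0 (η x) else 0))
      = δ₂ (η x) (η y) (ξ x) (ξ y) := by
    unfold δ₂
    rcases fin3 (ξ x) with hc | hc | hc <;> rcases fin3 (ξ y) with hd | hd | hd <;>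
      simp [mem_A1, mem_Am1, hc, hd, ind1, ind0] <;> ring
  linarith [h1, h2, hmem]

lemma IndP_swap_left :
    IndP L (η ∘ Equiv.swap x y) ξ ↔
      ((∀ z, z ≠ x → z ≠ y → C3 (η z) (ξ z)) ∧ C3 (η y) (ξ x) ∧ C3 (η x) (ξ y)) := by
  constructor
  · intro h
    refine ⟨fun z hzx hzy => ?_, ?_, ?_⟩
    · have := h z
      rwa [Function.comp_apply, Equiv.swap_apply_of_ne_of_ne hzx hzy] at this
    · have := h x
      rwa [Function.comp_apply, Equiv.swap_apply_left] at this
    · have := h y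
      rwa [Function.comp_apply, Equiv.swap_apply_right] at this
  · rintro ⟨hrest, hx, hy⟩ z
    rcases eq_or_ne z x with rfl | hzx
    · rwa [Function.comp_apply, Equiv.swap_apply_left]
    · rcases eq_or_ne z y with rfl | hzy
      · rwa [Function.comp_apply, Equiv.swap_apply_right]
      · rw [Function.comp_apply, Equiv.swap_apply_of_ne_of_ne hzx hzy]
        exact hrest z hzx hzy

lemma IndP_id_iff :
    IndP L η ξ ↔
      ((∀ z, z ≠ x → z ≠ y → C3 (η z) (ξ z)) ∧ C3 (η x) (ξ x) ∧ C3 (η y) (ξ y)) := by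
  constructor
  · intro h
    exact ⟨fun z _ _ => h z, h x, h y⟩
  · rintro ⟨hrest, hx, hy⟩ z
    rcases eq_or_ne z x with rfl | hzx
    · exact hx
    · rcases eq_or_ne z y with rfl | hzy
      · exact hy
      · exact hrest z hzx hzy

lemma IndP_swap_right :
    IndP L η (ξ ∘ Equiv.swap x y) ↔
      ((∀ z, z ≠ x → z ≠ y → C3 (η z) (ξ z)) ∧ C3 (η x) (ξ y) ∧ C3 (η y) (ξ x)) := by
  constructor
  · intro h
    refine ⟨fun z hzx hzy => ?_, ?_, ?_⟩
    · have := h z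
      rwa [Function.comp_apply, Equiv.swap_apply_of_ne_of_ne hzx hzy] at this
    · have := h x
      rwa [Function.comp_apply, Equiv.swap_apply_left] at this
    · have := h y
      rwa [Function.comp_apply, Equiv.swap_apply_right] at this
  · rintro ⟨hrest, hx, hy⟩ z
    rcases eq_or_ne z x with rfl | hzx
    · rwa [Function.comp_apply, Equiv.swap_apply_left]
    · rcases eq_or_ne z y with rfl | hzy
      · rwa [Function.comp_apply, Equiv.swap_apply_right]
      · rw [Function.comp_apply, Equiv.swap_apply_of_ne_of_ne hzx hzy]
        exact hrest z hzx hzy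

end Swap

lemma sum_if_pos (s : Finset (Fin (L+1))) :
    ∑ z ∈ s, (if (0 : Fin (L+1)) < z then (1:ℤ) else 0) =
      (s.card : ℤ) - (if (0 : Fin (L+1)) ∈ s then 1 else 0) := by
  have key : ∀ z ∈ s, (if (0 : Fin (L+1)) < z then (1:ℤ) else 0) =
      1 - (if z = 0 then 1 else 0) := by
    intro z _
    rcases eq_or_ne z 0 with rfl | hz
    · simp
    · have hp : (0 : Fin (L+1)) < z := Fin.pos_of_ne_zero hz
      simp [hp, hz]
  rw [Finset.sum_congr rfl key, Finset.sum_sub_distrib,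
    Finset.sum_ite_eq' s 0 (fun _ => (1:ℤ))]
  simp

lemma if_mem_A1 (ξ : Conf L) :
    (if (0 : Fin (L+1)) ∈ A1 L ξ then (1:ℤ) else 0) = ind1 (ξ 0) := by
  by_cases hξ : ξ 0 = 2 <;> simp [mem_A1, hξ, ind1]

lemma if_mem_Am1 (ξ : Conf L) :
    (if (0 : Fin (L+1)) ∈ Am1 L ξ then (1:ℤ) else 0) = ind0 (ξ 0) := by
  by_cases hξ : ξ 0 = 0 <;> simp [mem_Am1, hξ, ind0]

section Bdry

variable (η ξ : Conf L) (v : Fin 3)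

lemma NrP_update (z : Fin (L+1)) :
    NrP L (Function.update η 0 v) z = NrP L η z := by
  unfold NrP
  congr 1
  apply Finset.filter_congr
  intro w _
  rcases eq_or_ne w 0 with rfl | hw
  · have : ¬ z < (0 : Fin (L+1)) := by simp [Fin.lt_def]
    simp [this]
  · rw [Function.update_of_ne hw]

lemma NlM_update (z : Fin (L+1)) :
    (NlM L (Function.update η 0 v) z : ℤ) =
      (NlM L η z : ℤ) + (if (0 : Fin (L+1)) < z then ind0 v - ind0 (η 0) else 0) := by
  unfold NlM
  rw [Finset.card_filter, Finset.card_filter]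
  push_cast
  have key : ∀ w : Fin (L+1),
      (if w < z ∧ Function.update η 0 v w = 0 then (1:ℤ) else 0) =
        (if w < z ∧ η w = 0 then (1:ℤ) else 0) +
          (if w = 0 then (if (0 : Fin (L+1)) < z then ind0 v - ind0 (η 0) else 0) else 0) := by
    intro w
    rcases eq_or_ne w 0 with rfl | hw
    · simp only [Function.update_self, if_pos rfl]
      by_cases hz : (0 : Fin (L+1)) < z
      · by_cases hv : v = 0 <;> by_cases h0 : η 0 = 0 <;>
          simp [hz, hv, h0, ind0]
      · simp [hz]
    · rw [Function.update_of_ne hw]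
      simp [hw]
  rw [Finset.sum_congr rfl fun w _ => key w, Finset.sum_add_distrib,
    Finset.sum_ite_eq' Finset.univ (0 : Fin (L+1))
      (fun _ => if (0 : Fin (L+1)) < z then ind0 v - ind0 (η 0) else 0)]
  simp

lemma NlM_zero : NlM L η 0 = 0 := by
  unfold NlM
  rw [Finset.card_eq_zero]
  refine Finset.filter_eq_empty_iff.mpr fun y _ => ?_
  simp [Fin.lt_def]

lemma NrP_zero : (NrP L η 0 : ℤ) = ((A1 L η).card : ℤ) - ind1 (η 0) := by
  unfold NrP A1
  rw [Finset.card_filter, Finset.card_filter]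
  push_cast
  have key : ∀ w : Fin (L+1),
      (if η w = 2 then (1:ℤ) else 0) =
        (if (0 : Fin (L+1)) < w ∧ η w = 2 then (1:ℤ) else 0) +
          (if w = 0 then ind1 (η 0) else 0) := by
    intro w
    rcases eq_or_ne w 0 with rfl | hw
    · simp [ind1]
    · have hp : (0 : Fin (L+1)) < w := Fin.pos_of_ne_zero hw
      simp [hp, hw]
  rw [Finset.sum_congr rfl fun w _ => key w, Finset.sum_add_distrib,
    Finset.sum_ite_eq' Finset.univ (0 : Fin (L+1)) (fun _ => ind1 (η 0))]
  simp

lemma A1_update_zero : A1 L (Function.update η 0 (0 : Fin 3)) = (A1 L η).erase 0 := by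
  ext z
  rcases eq_or_ne z 0 with rfl | hz
  · simp [mem_A1]
  · simp [mem_A1, Finset.mem_erase, hz, Function.update_of_ne hz, A1]

lemma Am1_update_zero : Am1 L (Function.update η 0 (0 : Fin 3)) = insert 0 (Am1 L η) := by
  ext z
  rcases eq_or_ne z 0 with rfl | hz
  · simp [mem_Am1]
  · simp [mem_Am1, Finset.mem_insert, hz, Function.update_of_ne hz, Am1]

lemma A1_update_two : A1 L (Function.update η 0 (2 : Fin 3)) = insert 0 (A1 L η) := by
  ext z
  rcases eq_or_ne z 0 with rfl | hz
  · simp [mem_A1]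
  · simp [mem_A1, Finset.mem_insert, hz, Function.update_of_ne hz, A1]

lemma Am1_update_two : Am1 L (Function.update η 0 (2 : Fin 3)) = (Am1 L η).erase 0 := by
  ext z
  rcases eq_or_ne z 0 with rfl | hz
  · simp [mem_Am1]
  · simp [mem_Am1, Finset.mem_erase, hz, Function.update_of_ne hz, Am1]

lemma Dexp_bdry_left_two (h : η 0 = 2) :
    Dexp L (Function.update η 0 (0 : Fin 3)) ξ = Dexp L η ξ + 2 * ind0 (ξ 0) := by
  have h0 : (0 : Fin (L+1)) ∈ A1 L η := (mem_A1 η 0).mpr h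
  unfold Dexp
  have hcard : (((A1 L (Function.update η 0 (0 : Fin 3))).card : ℤ)) = ((A1 L η).card : ℤ) - 1 := by
    rw [A1_update_zero, Finset.card_erase_of_mem h0,
      Nat.cast_sub (Finset.card_pos.mpr ⟨0, h0⟩)]
    simp
  have h1 : ∑ z ∈ A1 L ξ, (-2 * ((z:ℕ):ℤ) - 2 * (NrP L (Function.update η 0 (0:Fin 3)) z : ℤ))
      = ∑ z ∈ A1 L ξ, (-2 * ((z:ℕ):ℤ) - 2 * (NrP L η z : ℤ)) :=
    Finset.sum_congr rfl fun z _ => by rw [NrP_update]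
  have key : ∀ z ∈ Am1 L ξ,
      2 * ((z:ℕ):ℤ) - 2 * (NlM L (Function.update η 0 (0:Fin 3)) z : ℤ) + 2 * (NrP L ξ z : ℤ)
        = (2 * ((z:ℕ):ℤ) - 2 * (NlM L η z : ℤ) + 2 * (NrP L ξ z : ℤ)) -
            2 * (if (0 : Fin (L+1)) < z then (1:ℤ) else 0) := by
    intro z _
    rw [NlM_update]
    have hv : ind0 (0 : Fin 3) = 1 := by simp [ind0]
    have h0' : ind0 (η 0) = 0 := by simp [ind0, h]
    rw [hv, h0']
    by_cases hz : (0 : Fin (L+1)) < z <;> simp [hz] <;> ring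
  have h2' : ∑ z ∈ Am1 L ξ,
      (2 * ((z:ℕ):ℤ) - 2 * (NlM L (Function.update η 0 (0:Fin 3)) z : ℤ) + 2 * (NrP L ξ z : ℤ))
      = ∑ z ∈ Am1 L ξ, (2 * ((z:ℕ):ℤ) - 2 * (NlM L η z : ℤ) + 2 * (NrP L ξ z : ℤ)) -
          2 * (((Am1 L ξ).card : ℤ) - ind0 (ξ 0)) := by
    rw [Finset.sum_congr rfl key, Finset.sum_sub_distrib, ← Finset.mul_sum, sum_if_pos,
      if_mem_Am1]
  rw [h1, hcard]
  linear_combination h2'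

lemma Dexp_bdry_left_zero (h : η 0 = 0) :
    Dexp L (Function.update η 0 (2 : Fin 3)) ξ = Dexp L η ξ - 2 * ind0 (ξ 0) := by
  have h0 : (0 : Fin (L+1)) ∉ A1 L η := fun hm => by
    rw [mem_A1] at hm; rw [h] at hm; exact absurd hm (by decide)
  unfold Dexp
  have hcard : (((A1 L (Function.update η 0 (2 : Fin 3))).card : ℤ)) = ((A1 L η).card : ℤ) + 1 := by
    rw [A1_update_two, Finset.card_insert_of_notMem h0]
    push_cast
    ring
  have h1 : ∑ z ∈ A1 L ξ, (-2 * ((z:ℕ):ℤ) - 2 * (NrP L (Function.update η 0 (2:Fin 3)) z : ℤ))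
      = ∑ z ∈ A1 L ξ, (-2 * ((z:ℕ):ℤ) - 2 * (NrP L η z : ℤ)) :=
    Finset.sum_congr rfl fun z _ => by rw [NrP_update]
  have key : ∀ z ∈ Am1 L ξ,
      2 * ((z:ℕ):ℤ) - 2 * (NlM L (Function.update η 0 (2:Fin 3)) z : ℤ) + 2 * (NrP L ξ z : ℤ)
        = (2 * ((z:ℕ):ℤ) - 2 * (NlM L η z : ℤ) + 2 * (NrP L ξ z : ℤ)) +
            2 * (if (0 : Fin (L+1)) < z then (1:ℤ) else 0) := by
    intro z _
    rw [NlM_update]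
    have hv : ind0 (2 : Fin 3) = 0 := by simp [ind0]
    have h0' : ind0 (η 0) = 1 := by simp [ind0, h]
    rw [hv, h0']
    by_cases hz : (0 : Fin (L+1)) < z <;> simp [hz] <;> ring
  have h2' : ∑ z ∈ Am1 L ξ,
      (2 * ((z:ℕ):ℤ) - 2 * (NlM L (Function.update η 0 (2:Fin 3)) z : ℤ) + 2 * (NrP L ξ z : ℤ))
      = ∑ z ∈ Am1 L ξ, (2 * ((z:ℕ):ℤ) - 2 * (NlM L η z : ℤ) + 2 * (NrP L ξ z : ℤ)) +
          2 * (((Am1 L ξ).card : ℤ) - ind0 (ξ 0)) := by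
    rw [Finset.sum_congr rfl key, Finset.sum_add_distrib, ← Finset.mul_sum, sum_if_pos,
      if_mem_Am1]
  rw [h1, hcard]
  linear_combination h2'

lemma Dexp_bdry_right_two (h : ξ 0 = 2) :
    Dexp L η (Function.update ξ 0 (0 : Fin 3)) = Dexp L η ξ - 2 * ind1 (η 0) := by
  have h0 : (0 : Fin (L+1)) ∈ A1 L ξ := (mem_A1 ξ 0).mpr h
  have h0' : (0 : Fin (L+1)) ∉ Am1 L ξ := fun hm => by
    rw [mem_Am1] at hm; rw [h] at hm; exact absurd hm (by decide)
  unfold Dexp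
  rw [A1_update_zero ξ, Am1_update_zero ξ]
  have hcard : (((A1 L ξ).erase 0).card : ℤ) = ((A1 L ξ).card : ℤ) - 1 := by
    rw [Finset.card_erase_of_mem h0, Nat.cast_sub (Finset.card_pos.mpr ⟨0, h0⟩)]
    simp
  have hcard2 : ((insert (0 : Fin (L+1)) (Am1 L ξ)).card : ℤ) = ((Am1 L ξ).card : ℤ) + 1 := by
    rw [Finset.card_insert_of_notMem h0']
    push_cast
    ring
  have h1 : ∑ z ∈ (A1 L ξ).erase 0, (-2 * ((z:ℕ):ℤ) - 2 * (NrP L η z : ℤ))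
      = ∑ z ∈ A1 L ξ, (-2 * ((z:ℕ):ℤ) - 2 * (NrP L η z : ℤ)) -
          (-2 * (((0 : Fin (L+1)):ℕ):ℤ) - 2 * (NrP L η 0 : ℤ)) :=
    Finset.sum_erase_eq_sub h0
  have h2 : ∑ z ∈ insert (0 : Fin (L+1)) (Am1 L ξ),
        (2 * ((z:ℕ):ℤ) - 2 * (NlM L η z : ℤ) + 2 * (NrP L (Function.update ξ 0 (0:Fin 3)) z : ℤ))
      = (2 * (((0 : Fin (L+1)):ℕ):ℤ) - 2 * (NlM L η 0 : ℤ) + 2 * (NrP L ξ 0 : ℤ)) +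
        ∑ z ∈ Am1 L ξ, (2 * ((z:ℕ):ℤ) - 2 * (NlM L η z : ℤ) + 2 * (NrP L ξ z : ℤ)) := by
    rw [Finset.sum_insert h0']
    congr 1
    · rw [NrP_update]
    · exact Finset.sum_congr rfl fun z _ => by rw [NrP_update]
  rw [h1, h2, hcard, hcard2, NrP_zero η, NrP_zero ξ, NlM_zero]
  have hξ1 : ind1 (ξ 0) = 1 := by simp [ind1, h]
  rw [hξ1]
  simp only [Fin.val_zero, Nat.cast_zero]
  push_cast
  ring

lemma Dexp_bdry_right_zero (h : ξ 0 = 0) :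
    Dexp L η (Function.update ξ 0 (2 : Fin 3)) = Dexp L η ξ + 2 * ind1 (η 0) := by
  have h0 : (0 : Fin (L+1)) ∈ Am1 L ξ := (mem_Am1 ξ 0).mpr h
  have h0' : (0 : Fin (L+1)) ∉ A1 L ξ := fun hm => by
    rw [mem_A1] at hm; rw [h] at hm; exact absurd hm (by decide)
  unfold Dexp
  rw [A1_update_two ξ, Am1_update_two ξ]
  have hcard : ((insert (0 : Fin (L+1)) (A1 L ξ)).card : ℤ) = ((A1 L ξ).card : ℤ) + 1 := by
    rw [Finset.card_insert_of_notMem h0']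
    push_cast
    ring
  have hcard2 : (((Am1 L ξ).erase 0).card : ℤ) = ((Am1 L ξ).card : ℤ) - 1 := by
    rw [Finset.card_erase_of_mem h0, Nat.cast_sub (Finset.card_pos.mpr ⟨0, h0⟩)]
    simp
  have h1 : ∑ z ∈ insert (0 : Fin (L+1)) (A1 L ξ), (-2 * ((z:ℕ):ℤ) - 2 * (NrP L η z : ℤ))
      = (-2 * (((0 : Fin (L+1)):ℕ):ℤ) - 2 * (NrP L η 0 : ℤ)) +
        ∑ z ∈ A1 L ξ, (-2 * ((z:ℕ):ℤ) - 2 * (NrP L η z : ℤ)) :=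
    Finset.sum_insert h0'
  have h2 : ∑ z ∈ (Am1 L ξ).erase 0,
        (2 * ((z:ℕ):ℤ) - 2 * (NlM L η z : ℤ) + 2 * (NrP L (Function.update ξ 0 (2:Fin 3)) z : ℤ))
      = ∑ z ∈ Am1 L ξ, (2 * ((z:ℕ):ℤ) - 2 * (NlM L η z : ℤ) + 2 * (NrP L ξ z : ℤ)) -
          (2 * (((0 : Fin (L+1)):ℕ):ℤ) - 2 * (NlM L η 0 : ℤ) + 2 * (NrP L ξ 0 : ℤ)) := by
    rw [Finset.sum_congr rfl (fun z _ => by rw [NrP_update] :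
      ∀ z ∈ (Am1 L ξ).erase 0,
        2 * ((z:ℕ):ℤ) - 2 * (NlM L η z : ℤ) + 2 * (NrP L (Function.update ξ 0 (2:Fin 3)) z : ℤ)
          = 2 * ((z:ℕ):ℤ) - 2 * (NlM L η z : ℤ) + 2 * (NrP L ξ z : ℤ))]
    exact Finset.sum_erase_eq_sub h0
  rw [h1, h2, hcard, hcard2, NrP_zero η, NrP_zero ξ, NlM_zero]
  have hξ1 : ind1 (ξ 0) = 0 := by simp [ind1, h]
  rw [hξ1]
  simp only [Fin.val_zero, Nat.cast_zero]
  push_cast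
  ring

lemma IndP_update_left :
    IndP L (Function.update η 0 v) ξ ↔
      ((∀ z, z ≠ 0 → C3 (η z) (ξ z)) ∧ C3 v (ξ 0)) := by
  constructor
  · intro hI
    refine ⟨fun z hz => ?_, ?_⟩
    · have := hI z
      rwa [Function.update_of_ne hz] at this
    · have := hI 0
      rwa [Function.update_self] at this
  · rintro ⟨hrest, h0⟩ z
    rcases eq_or_ne z 0 with rfl | hz
    · rwa [Function.update_self]
    · rw [Function.update_of_ne hz]
      exact hrest z hz

lemma IndP_update_right :
    IndP L η (Function.update ξ 0 v) ↔
      ((∀ z, z ≠ 0 → C3 (η z) (ξ z)) ∧ C3 (η 0) v) := by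
  constructor
  · intro hI
    refine ⟨fun z hz => ?_, ?_⟩
    · have := hI z
      rwa [Function.update_of_ne hz] at this
    · have := hI 0
      rwa [Function.update_self] at this
  · rintro ⟨hrest, h0⟩ z
    rcases eq_or_ne z 0 with rfl | hz
    · rwa [Function.update_self]
    · rw [Function.update_of_ne hz]
      exact hrest z hz

end Bdry

/-! ### Local identities -/

lemma local_bond {q : ℝ} (hq : q ≠ 0) (a b c d : Fin 3) :
    rte q a b * ((if C3 b c ∧ C3 a d then (1:ℝ) else 0) * q ^ δ₁ a b c d -
        (if C3 a c ∧ C3 b d then (1:ℝ) else 0)) =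
    rte q c d * ((if C3 a d ∧ C3 b c then (1:ℝ) else 0) * q ^ δ₂ a b c d -
        (if C3 a c ∧ C3 b d then (1:ℝ) else 0)) := by
  fin_cases a <;> fin_cases b <;> fin_cases c <;> fin_cases d <;>
    simp [rte, C3, δ₁, δ₂, ind1, ind0, zpow_ofNat, _root_.zpow_neg] <;> first | ring1 | (field_simp <;> ring1)

lemma local_bdry {q Q : ℝ} (hq : q ≠ 0) (hQ : Q ≠ 0) (e f : Fin 3) :
    (if e = 2 then
        ((if C3 0 f then (1:ℝ) else 0) * q ^ (2 * ind0 f) - (if C3 e f then (1:ℝ) else 0))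
      else if e = 0 then
        Q ^ 2 * ((if C3 2 f then (1:ℝ) else 0) * q ^ (-2 * ind0 f) -
          (if C3 e f then (1:ℝ) else 0))
      else 0) =
    (if f = 2 then
        ((if C3 e 0 then (1:ℝ) else 0) * Q ^ (2:ℤ) * q ^ (-2 * ind1 e) -
          (if C3 e f then (1:ℝ) else 0))
      else if f = 0 then
        Q ^ 2 * ((if C3 e 2 then (1:ℝ) else 0) * Q ^ (-2:ℤ) * q ^ (2 * ind1 e) -
          (if C3 e f then (1:ℝ) else 0))
      else 0) := by
  fin_cases e <;> fin_cases f <;>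
    simp [C3, ind1, ind0, zpow_ofNat, _root_.zpow_neg] <;>
      first | ring1 | (field_simp <;> ring1)

lemma IndP_id0 (η ξ : Conf L) :
    IndP L η ξ ↔ ((∀ z, z ≠ 0 → C3 (η z) (ξ z)) ∧ C3 (η 0) (ξ 0)) := by
  constructor
  · intro h
    exact ⟨fun z _ => h z, h 0⟩
  · rintro ⟨hrest, h0⟩ z
    rcases eq_or_ne z 0 with rfl | hz
    · exact h0
    · exact hrest z hz

section Main

variable {L : ℕ} (q Q : ℝ)

lemma comp_swap_eq_self {η : Conf L} {x y : Fin (L+1)} (h : η x = η y) :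
    η ∘ Equiv.swap x y = η := by
  funext z
  rcases eq_or_ne z x with rfl | hzx
  · simp only [Function.comp_apply, Equiv.swap_apply_left]
    exact h.symm
  · rcases eq_or_ne z y with rfl | hzy
    · simp only [Function.comp_apply, Equiv.swap_apply_right]
      exact h
    · simp only [Function.comp_apply, Equiv.swap_apply_of_ne_of_ne hzx hzy]

lemma bulk_self (η : Conf L) : bulk L q η η = 0 := by
  unfold bulk
  refine Finset.sum_eq_zero fun x _ => ?_
  by_cases h : (x : ℕ) + 1 < L + 1
  · rw [dif_pos h]
    have hcond : ¬ (η = η ∘ Equiv.swap x ⟨(x:ℕ)+1, h⟩ ∧ η x ≠ η ⟨(x:ℕ)+1, h⟩) := by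
      rintro ⟨heq, hne⟩
      apply hne
      calc η x = (η ∘ Equiv.swap x ⟨(x:ℕ)+1, h⟩) x := by rw [← heq]
        _ = η ⟨(x:ℕ)+1, h⟩ := by
          simp only [Function.comp_apply, Equiv.swap_apply_left]
    rw [if_neg hcond]
  · rw [dif_neg h]

lemma bdry_self (η : Conf L) : bdry L Q η η = 0 := by
  unfold bdry
  rw [if_neg, if_neg]
  · rintro ⟨_, h2, h0⟩
    rw [h2] at h0
    exact absurd h0 (by decide)
  · rintro ⟨_, h2, h0⟩
    rw [h2] at h0
    exact absurd h0 (by decide)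

lemma bdry_eq_ite (η η' : Conf L) : bdry L Q η η' =
    if η 0 = 2 then (if η' = Function.update η 0 0 then 1 else 0)
    else if η 0 = 0 then (if η' = Function.update η 0 2 then Q ^ 2 else 0)
    else 0 := by
  unfold bdry
  have hcond2 : ((∀ z, z ≠ 0 → η' z = η z) ∧ η 0 = 2 ∧ η' 0 = 0) ↔
      (η 0 = 2 ∧ η' = Function.update η 0 0) := by
    constructor
    · rintro ⟨hrest, h2, h0'⟩
      refine ⟨h2, funext fun z => ?_⟩
      rcases eq_or_ne z 0 with rfl | hz
      · rw [Function.update_self]; exact h0'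
      · rw [Function.update_of_ne hz]; exact hrest z hz
    · rintro ⟨h2, rfl⟩
      exact ⟨fun z hz => Function.update_of_ne hz _ _, h2, Function.update_self _ _ _⟩
  have hcond0 : ((∀ z, z ≠ 0 → η' z = η z) ∧ η 0 = 0 ∧ η' 0 = 2) ↔
      (η 0 = 0 ∧ η' = Function.update η 0 2) := by
    constructor
    · rintro ⟨hrest, h2, h0'⟩
      refine ⟨h2, funext fun z => ?_⟩
      rcases eq_or_ne z 0 with rfl | hz
      · rw [Function.update_self]; exact h0'
      · rw [Function.update_of_ne hz]; exact hrest z hz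
    · rintro ⟨h2, rfl⟩
      exact ⟨fun z hz => Function.update_of_ne hz _ _, h2, Function.update_self _ _ _⟩
  rw [if_congr hcond2 rfl rfl, if_congr hcond0 rfl rfl]
  rcases fin3 (η 0) with h | h | h <;> simp [h]

lemma sum_bdry_mul (η : Conf L) (g : Conf L → ℝ) :
    ∑ η', bdry L Q η η' * g η' =
      (if η 0 = 2 then g (Function.update η 0 0)
       else if η 0 = 0 then Q ^ 2 * g (Function.update η 0 2) else 0) := by
  simp only [bdry_eq_ite]
  rcases fin3 (η 0) with h | h | h
  · have h2 : ¬ η 0 = 2 := by rw [h]; decide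
    simp only [if_neg h2, if_pos h]
    have key : ∀ η' : Conf L,
        (if η' = Function.update η 0 2 then Q ^ 2 else 0) * g η' =
          (if η' = Function.update η 0 2 then Q ^ 2 * g η' else 0) := by
      intro η'
      by_cases hh : η' = Function.update η 0 2 <;> simp [hh]
    rw [Finset.sum_congr rfl fun η' _ => key η',
      Finset.sum_ite_eq' Finset.univ (Function.update η 0 2) (fun η' => Q ^ 2 * g η')]
    simp
  · have h2 : ¬ η 0 = 2 := by rw [h]; decide
    have h0 : ¬ η 0 = 0 := by rw [h]; decide
    simp only [if_neg h2, if_neg h0]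
    simp
  · simp only [if_pos h]
    have key : ∀ η' : Conf L,
        (if η' = Function.update η 0 0 then (1:ℝ) else 0) * g η' =
          (if η' = Function.update η 0 0 then g η' else 0) := by
      intro η'
      by_cases hh : η' = Function.update η 0 0 <;> simp [hh]
    rw [Finset.sum_congr rfl fun η' _ => key η',
      Finset.sum_ite_eq' Finset.univ (Function.update η 0 0) (fun η' => g η')]
    simp

lemma sum_bulk_mul (η : Conf L) (f : Conf L → ℝ) :
    ∑ η', bulk L q η η' * (f η' - f η) =
      ∑ x : Fin (L+1), (if h : (x:ℕ)+1 < L+1 then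
        rte q (η x) (η ⟨(x:ℕ)+1, h⟩) *
          (f (η ∘ Equiv.swap x ⟨(x:ℕ)+1, h⟩) - f η) else 0) := by
  unfold bulk
  rw [Finset.sum_congr rfl fun η' (_ : η' ∈ Finset.univ) => Finset.sum_mul _ _ (f η' - f η),
    Finset.sum_comm]
  refine Finset.sum_congr rfl fun x _ => ?_
  by_cases h : (x : ℕ) + 1 < L + 1
  · simp only [dif_pos h]
    have key : ∀ η' : Conf L,
        (if η' = η ∘ Equiv.swap x ⟨(x:ℕ)+1, h⟩ ∧ η x ≠ η ⟨(x:ℕ)+1, h⟩ then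
            (if η ⟨(x:ℕ)+1, h⟩ < η x then q ^ 2 else 1) else 0) * (f η' - f η) =
          (if η' = η ∘ Equiv.swap x ⟨(x:ℕ)+1, h⟩ then
            (if η x ≠ η ⟨(x:ℕ)+1, h⟩ then
              (if η ⟨(x:ℕ)+1, h⟩ < η x then q ^ 2 else 1) else 0) * (f η' - f η) else 0) := by
      intro η'
      by_cases h1 : η' = η ∘ Equiv.swap x ⟨(x:ℕ)+1, h⟩ <;>
        by_cases h2 : η x ≠ η ⟨(x:ℕ)+1, h⟩ <;> simp [h1, h2]
    rw [Finset.sum_congr rfl fun η' _ => key η',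
      Finset.sum_ite_eq' Finset.univ (η ∘ Equiv.swap x ⟨(x:ℕ)+1, h⟩) _]
    simp only [Finset.mem_univ, if_true]
    by_cases h2 : η x = η ⟨(x:ℕ)+1, h⟩
    · rw [comp_swap_eq_self h2]
      simp [h2, rte]
    · simp [h2, rte]
  · simp only [dif_neg h]
    simp

lemma sum_gen_mul (η : Conf L) (f : Conf L → ℝ) :
    ∑ η', gen L q Q η η' * f η' =
      ∑ η', (bulk L q η η' + bdry L Q η η') * (f η' - f η) := by
  classical
  unfold gen
  rw [← Finset.add_sum_erase Finset.univ
      (fun η' => (if η' = η then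
        -∑ η'', (if η'' = η then 0 else bulk L q η η'' + bdry L Q η η'')
        else bulk L q η η' + bdry L Q η η') * f η') (Finset.mem_univ η),
    ← Finset.add_sum_erase Finset.univ
      (fun η' => (bulk L q η η' + bdry L Q η η') * (f η' - f η)) (Finset.mem_univ η)]
  simp only [if_pos rfl]
  rw [Finset.sum_congr rfl fun η' hη' =>
    (by rw [if_neg (Finset.ne_of_mem_erase hη')] :
      (if η' = η then
        -∑ η'', (if η'' = η then 0 else bulk L q η η'' + bdry L Q η η'')
        else bulk L q η η' + bdry L Q η η') * f η' =
      (bulk L q η η' + bdry L Q η η') * f η')]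
  simp only [eq_self_iff_true, if_true]
  have h2 : ∑ η'', (if η'' = η then 0 else bulk L q η η'' + bdry L Q η η'') =
      ∑ η'' ∈ Finset.univ.erase η, (bulk L q η η'' + bdry L Q η η'') := by
    rw [← Finset.add_sum_erase Finset.univ
      (fun η'' => if η'' = η then 0 else bulk L q η η'' + bdry L Q η η'') (Finset.mem_univ η),
      if_pos rfl, zero_add]
    exact Finset.sum_congr rfl fun η'' hη'' => if_neg (Finset.ne_of_mem_erase hη'')
  rw [h2]
  have h3 : ∑ η' ∈ Finset.univ.erase η, (bulk L q η η' + bdry L Q η η') * (f η' - f η) =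
      (∑ η' ∈ Finset.univ.erase η, (bulk L q η η' + bdry L Q η η') * f η') -
        (∑ η' ∈ Finset.univ.erase η, (bulk L q η η' + bdry L Q η η')) * f η := by
    rw [Finset.sum_mul, ← Finset.sum_sub_distrib]
    exact Finset.sum_congr rfl fun η' _ => by ring
  rw [h3]
  have h4 : bulk L q η η + bdry L Q η η = 0 := by
    rw [bulk_self, bdry_self]; ring
  rw [h4]
  ring

lemma bond_eq (hq : q ≠ 0) (η ξ : Conf L) (x y : Fin (L+1)) (hxy : (x:ℕ) + 1 = (y:ℕ)) :
    rte q (η x) (η y) * (dualFn L q Q (η ∘ Equiv.swap x y) ξ - dualFn L q Q η ξ) =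
    rte q (ξ x) (ξ y) * (dualFn L q Q η (ξ ∘ Equiv.swap x y) - dualFn L q Q η ξ) := by
  simp only [dualFn_eq hq]
  rw [card_A1_swap ξ x y, Dexp_swap_left η ξ x y hxy, Dexp_swap_right η ξ x y hxy,
    zpow_add₀ hq, zpow_add₀ hq,
    if_congr (IndP_swap_left η ξ x y) rfl rfl, if_congr (IndP_id_iff η ξ x y) rfl rfl,
    if_congr (IndP_swap_right η ξ x y) rfl rfl]
  by_cases hR : ∀ z, z ≠ x → z ≠ y → C3 (η z) (ξ z)
  · simp only [eq_true hR, true_and]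
    have key := local_bond hq (η x) (η y) (ξ x) (ξ y)
    linear_combination (Q ^ (-2 * ((A1 L ξ).card : ℤ)) * q ^ Dexp L η ξ) * key
  · simp only [eq_false hR, false_and, if_false]
    ring

lemma bdryterm_eq (hq : q ≠ 0) (hQ : Q ≠ 0) (η ξ : Conf L) :
    (if η 0 = 2 then dualFn L q Q (Function.update η 0 0) ξ - dualFn L q Q η ξ
     else if η 0 = 0 then Q ^ 2 * (dualFn L q Q (Function.update η 0 2) ξ - dualFn L q Q η ξ)
     else 0) =
    (if ξ 0 = 2 then dualFn L q Q η (Function.update ξ 0 0) - dualFn L q Q η ξ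
     else if ξ 0 = 0 then Q ^ 2 * (dualFn L q Q η (Function.update ξ 0 2) - dualFn L q Q η ξ)
     else 0) := by
  have key := local_bdry (q := q) (Q := Q) hq hQ (η 0) (ξ 0)
  have lhs_eq :
      (if η 0 = 2 then dualFn L q Q (Function.update η 0 0) ξ - dualFn L q Q η ξ
       else if η 0 = 0 then Q ^ 2 * (dualFn L q Q (Function.update η 0 2) ξ - dualFn L q Q η ξ)
       else 0) =
      (if (∀ z, z ≠ 0 → C3 (η z) (ξ z)) then (1:ℝ) else 0) *
        Q ^ (-2 * ((A1 L ξ).card : ℤ)) * q ^ Dexp L η ξ *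
      (if η 0 = 2 then
          ((if C3 0 (ξ 0) then (1:ℝ) else 0) * q ^ (2 * ind0 (ξ 0)) -
            (if C3 (η 0) (ξ 0) then (1:ℝ) else 0))
        else if η 0 = 0 then
          Q ^ 2 * ((if C3 2 (ξ 0) then (1:ℝ) else 0) * q ^ (-2 * ind0 (ξ 0)) -
            (if C3 (η 0) (ξ 0) then (1:ℝ) else 0))
        else 0) := by
    by_cases h2 : η 0 = 2
    · rw [if_pos h2, if_pos h2]
      simp only [dualFn_eq hq]
      rw [Dexp_bdry_left_two η ξ h2, zpow_add₀ hq,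
        if_congr (IndP_update_left η ξ 0) rfl rfl, if_congr (IndP_id0 η ξ) rfl rfl]
      by_cases hR : ∀ z, z ≠ 0 → C3 (η z) (ξ z)
      · simp only [eq_true hR, true_and, if_true]
        ring
      · simp only [eq_false hR, false_and, if_false]
        ring
    · rw [if_neg h2, if_neg h2]
      by_cases h0 : η 0 = 0
      · rw [if_pos h0, if_pos h0]
        simp only [dualFn_eq hq]
        rw [Dexp_bdry_left_zero η ξ h0,
          show Dexp L η ξ - 2 * ind0 (ξ 0) = Dexp L η ξ + (-2 * ind0 (ξ 0)) from by ring,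
          zpow_add₀ hq,
          if_congr (IndP_update_left η ξ 2) rfl rfl, if_congr (IndP_id0 η ξ) rfl rfl]
        by_cases hR : ∀ z, z ≠ 0 → C3 (η z) (ξ z)
        · simp only [eq_true hR, true_and, if_true]
          ring
        · simp only [eq_false hR, false_and, if_false]
          ring
      · rw [if_neg h0, if_neg h0]
        ring
  have rhs_eq :
      (if ξ 0 = 2 then dualFn L q Q η (Function.update ξ 0 0) - dualFn L q Q η ξ
       else if ξ 0 = 0 then Q ^ 2 * (dualFn L q Q η (Function.update ξ 0 2) - dualFn L q Q η ξ)
       else 0) =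
      (if (∀ z, z ≠ 0 → C3 (η z) (ξ z)) then (1:ℝ) else 0) *
        Q ^ (-2 * ((A1 L ξ).card : ℤ)) * q ^ Dexp L η ξ *
      (if ξ 0 = 2 then
          ((if C3 (η 0) 0 then (1:ℝ) else 0) * Q ^ (2:ℤ) * q ^ (-2 * ind1 (η 0)) -
            (if C3 (η 0) (ξ 0) then (1:ℝ) else 0))
        else if ξ 0 = 0 then
          Q ^ 2 * ((if C3 (η 0) 2 then (1:ℝ) else 0) * Q ^ (-2:ℤ) * q ^ (2 * ind1 (η 0)) -
            (if C3 (η 0) (ξ 0) then (1:ℝ) else 0))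
        else 0) := by
    by_cases h2 : ξ 0 = 2
    · rw [if_pos h2, if_pos h2]
      simp only [dualFn_eq hq]
      have hmem : (0 : Fin (L+1)) ∈ A1 L ξ := (mem_A1 ξ 0).mpr h2
      have hc : (-2 * ((A1 L (Function.update ξ 0 0)).card : ℤ)) =
          (-2 * ((A1 L ξ).card : ℤ)) + 2 := by
        rw [A1_update_zero ξ, Finset.card_erase_of_mem hmem,
          Nat.cast_sub (Finset.card_pos.mpr ⟨0, hmem⟩)]
        push_cast
        ring
      rw [Dexp_bdry_right_two η ξ h2,
        show Dexp L η ξ - 2 * ind1 (η 0) = Dexp L η ξ + (-2 * ind1 (η 0)) from by ring,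
        zpow_add₀ hq, hc, zpow_add₀ hQ,
        if_congr (IndP_update_right η ξ 0) rfl rfl, if_congr (IndP_id0 η ξ) rfl rfl]
      by_cases hR : ∀ z, z ≠ 0 → C3 (η z) (ξ z)
      · simp only [eq_true hR, true_and, if_true]
        ring
      · simp only [eq_false hR, false_and, if_false]
        ring
    · rw [if_neg h2, if_neg h2]
      by_cases h0 : ξ 0 = 0
      · rw [if_pos h0, if_pos h0]
        simp only [dualFn_eq hq]
        have hmem : (0 : Fin (L+1)) ∉ A1 L ξ := fun hm => by
          rw [mem_A1] at hm; rw [h0] at hm; exact absurd hm (by decide)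
        have hc : (-2 * ((A1 L (Function.update ξ 0 2)).card : ℤ)) =
            (-2 * ((A1 L ξ).card : ℤ)) + (-2) := by
          rw [A1_update_two ξ, Finset.card_insert_of_notMem hmem]
          push_cast
          ring
        rw [Dexp_bdry_right_zero η ξ h0, zpow_add₀ hq, hc, zpow_add₀ hQ,
          if_congr (IndP_update_right η ξ 2) rfl rfl, if_congr (IndP_id0 η ξ) rfl rfl]
        by_cases hR : ∀ z, z ≠ 0 → C3 (η z) (ξ z)
        · simp only [eq_true hR, true_and, if_true]
          ring
        · simp only [eq_false hR, false_and, if_false]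
          ring
      · rw [if_neg h0, if_neg h0]
        ring
  rw [lhs_eq, rhs_eq, key]

end Main

end Aux

/-- **Self-duality of the single-species open ASEP** (Theorem 1.3 with `r = 1`):
the generator `𝓛` satisfies `𝓛 · D = D · 𝓛ᵀ` for the duality function `D` above. -/
theorem open_ASEP_self_duality (L : ℕ) (hL : 1 ≤ L)
    (q Q : ℝ) (hq0 : 0 < q) (hq1 : q < 1) (hQ0 : 0 < Q) (hQ1 : Q < 1) :
    gen L q Q * dualFn L q Q = dualFn L q Q * (gen L q Q)ᵀ := by
  have hq : q ≠ 0 := ne_of_gt hq0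
  have hQ : Q ≠ 0 := ne_of_gt hQ0
  ext η ξ
  rw [Matrix.mul_apply, Matrix.mul_apply]
  simp only [Matrix.transpose_apply]
  rw [Finset.sum_congr rfl fun ξ' (_ : ξ' ∈ Finset.univ) =>
    mul_comm (dualFn L q Q η ξ') (gen L q Q ξ ξ')]
  rw [sum_gen_mul q Q η (fun η' => dualFn L q Q η' ξ),
    sum_gen_mul q Q ξ (fun ξ' => dualFn L q Q η ξ')]
  have split : ∀ (ζ : Conf L) (f : Conf L → ℝ),
      ∑ ζ', (bulk L q ζ ζ' + bdry L Q ζ ζ') * (f ζ' - f ζ) =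
        (∑ ζ', bulk L q ζ ζ' * (f ζ' - f ζ)) + ∑ ζ', bdry L Q ζ ζ' * (f ζ' - f ζ) := by
    intro ζ f
    rw [← Finset.sum_add_distrib]
    exact Finset.sum_congr rfl fun ζ' _ => add_mul _ _ _
  rw [split, split, sum_bulk_mul, sum_bulk_mul, sum_bdry_mul, sum_bdry_mul]
  congr 1
  · refine Finset.sum_congr rfl fun x _ => ?_
    by_cases h : (x : ℕ) + 1 < L + 1
    · rw [dif_pos h, dif_pos h]
      exact bond_eq q Q hq η ξ x ⟨(x:ℕ)+1, h⟩ rfl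
    · rw [dif_neg h, dif_neg h]
  · exact bdryterm_eq q Q hq hQ η ξ

end Stmt1

end
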